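/- Let μ be a probability mass function on a countable type S, let γ be a real with 0 < γ ≤ 1, and let (g_i)_{i∈ℕ} be a sequence of functions g_i : S → ℝ with 0 ≤ g_i(s) ≤ 2 for all i and s. If ∑_s μ(s)·g_i(s) ≥ 1+γ for every i ∈ ℕ, then there exists s ∈ S with μ(s) > 0 such that g_i(s) ≥ 1+γ/2 for infinitely many i. (This is the argument showing that if a mixed strategy T of Player 2 yields expected payoff at least 1+γ against Alice for every discount rate in an infinite sequence, then some single pure strategy in the support of T yields payoff at least 1+γ/2 for infinitely many of these discount rates; it crucially uses that the payoffs of the Factoring game are bounded above by 2.) -/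

import Mathlib

open Real Set

/-- If each of a sequence of [0,2]-valued functions g_i has expectation at least
1+γ under a probability mass function μ, then some point s with μ(s) > 0
satisfies g_i(s) ≥ 1+γ/2 for infinitely many i. -/
theorem pure_strategy_high_payoff_extraction {S : Type*} [Countable S]
    (μ : S → ℝ) (hμ0 : ∀ s, 0 ≤ μ s) (hμ1 : HasSum μ 1)
    (γ : ℝ) (hγ0 : 0 < γ) (hγ1 : γ ≤ 1)
    (g : ℕ → S → ℝ) (hg0 : ∀ i s, 0 ≤ g i s) (hg2 : ∀ i s, g i s ≤ 2)
    (hE : ∀ i : ℕ, 1 + γ ≤ ∑' s, μ s * g i s) :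
    ∃ s : S, 0 < μ s ∧ {i : ℕ | 1 + γ / 2 ≤ g i s}.Infinite := by
  classical
  have hμs : Summable μ := hμ1.summable
  set A : ℕ → Set S := fun i => {s | 1 + γ / 2 ≤ g i s} with hA
  -- Each set A i has μ-mass at least γ/2.
  have hm : ∀ i, γ / 2 ≤ ∑' s, Set.indicator (A i) μ s := by
    intro i
    have hind : Summable (Set.indicator (A i) μ) := hμs.indicator _
    have hind' : Summable (Set.indicator (A i) fun s => (1 - γ / 2) * μ s) :=
      (hμs.mul_left _).indicator _
    have hgs : Summable fun s => μ s * g i s :=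
      Summable.of_nonneg_of_le (fun s => mul_nonneg (hμ0 s) (hg0 i s))
        (fun s => by nlinarith [hg2 i s, hμ0 s, hg0 i s]) (hμs.mul_left 2)
    have hle : ∀ s, μ s * g i s ≤
        (1 + γ / 2) * μ s + Set.indicator (A i) (fun s => (1 - γ / 2) * μ s) s := by
      intro s
      by_cases h : s ∈ A i
      · rw [Set.indicator_of_mem h]
        have h2 : g i s ≤ 2 := hg2 i s
        nlinarith [hμ0 s]
      · rw [Set.indicator_of_notMem h]
        have h2 : g i s ≤ 1 + γ / 2 := le_of_not_ge h
        nlinarith [hμ0 s]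
    have hsum := Summable.tsum_le_tsum hle hgs ((hμs.mul_left _).add hind')
    rw [Summable.tsum_add (hμs.mul_left _) hind', tsum_mul_left, hμ1.tsum_eq] at hsum
    have hindeq : (Set.indicator (A i) fun s => (1 - γ / 2) * μ s) =
        fun s => (1 - γ / 2) * Set.indicator (A i) μ s := by
      funext s; by_cases h : s ∈ A i <;> simp [h]
    rw [hindeq, tsum_mul_left] at hsum
    have hmnn : 0 ≤ ∑' s, Set.indicator (A i) μ s :=
      tsum_nonneg fun s => Set.indicator_nonneg (fun s _ => hμ0 s) s
    have := hE i
    nlinarith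
  by_contra hcon
  push_neg at hcon
  have hfin : ∀ s, 0 < μ s → {i : ℕ | 1 + γ / 2 ≤ g i s}.Finite := by
    intro s hs
    rcases Set.finite_or_infinite {i : ℕ | 1 + γ / 2 ≤ g i s} with h | h
    · exact h
    · exact absurd (hcon s hs) h
  -- Choose a finite set F carrying all but < γ/2 of the mass.
  have htail := tendsto_tsum_compl_atTop_zero μ
  have h2 : (0 : ℝ) < γ / 2 := by linarith
  obtain ⟨F, hF⟩ :=
    ((tendsto_order.1 htail).2 _ h2).exists
  -- Pick an index beyond all the finitely many good indices of points in F.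
  set N : ℕ := F.sup fun s =>
    if h : 0 < μ s then (hfin s h).toFinset.sup id + 1 else 0 with hN
  have key : ∀ s, Set.indicator (A N) μ s ≤ Set.indicator ((↑F : Set S)ᶜ) μ s := by
    intro s
    by_cases hsF : s ∈ F
    · rw [Set.indicator_of_notMem (s := ((↑F : Set S)ᶜ)) (by simpa using hsF)]
      by_cases hs0 : 0 < μ s
      · have hsA : s ∉ A N := by
          intro hsA
          have hNmem : N ∈ (hfin s hs0).toFinset := by
            exact (Set.Finite.mem_toFinset (hfin s hs0)).2 hsA
          have h1 : N ≤ (hfin s hs0).toFinset.sup id := Finset.le_sup (f := id) hNmem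
          have h2 : (hfin s hs0).toFinset.sup id + 1 ≤ N := by
            have := Finset.le_sup (f := fun s =>
              if h : 0 < μ s then (hfin s h).toFinset.sup id + 1 else 0) hsF
            simpa [hN, dif_pos hs0] using this
          omega
        rw [Set.indicator_of_notMem hsA]
      · have hμz : μ s = 0 := le_antisymm (not_lt.1 hs0) (hμ0 s)
        by_cases hsA : s ∈ A N
        · rw [Set.indicator_of_mem hsA, hμz]
        · rw [Set.indicator_of_notMem hsA]
    · rw [Set.indicator_of_mem (s := ((↑F : Set S)ᶜ)) (by simpa using hsF)]
      by_cases hsA : s ∈ A N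
      · rw [Set.indicator_of_mem hsA]
      · rw [Set.indicator_of_notMem hsA]; exact hμ0 s
  have hsum1 : (∑' s, Set.indicator (A N) μ s) ≤ ∑' s, Set.indicator ((↑F : Set S)ᶜ) μ s :=
    Summable.tsum_le_tsum key (hμs.indicator _) (hμs.indicator _)
  have hsum2 : (∑' s, Set.indicator ((↑F : Set S)ᶜ) μ s) = ∑' x : { x // x ∉ F }, μ x :=
    (tsum_subtype _ _).symm
  have := hm N
  rw [hsum2] at hsum1
  linarith
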